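/- Let (Λ,d) be a k-graph satisfying the standing assumption (★) and fix 0 < r < 1. For x,y ∈ Λ^Δ the following are equivalent: (i) x ~_s y, i.e. ρ(σ^{je} x, σ^{je} y) → 0 as j → ∞; (ii) there exists m ∈ ℤ^k such that x(m,n) = y(m,n) for all n ≥ m; (iii) there exists m ∈ ℕ^k such that π(σ^m x) = π(σ^m y). Similarly, x ~_u y (i.e. ρ(σ^{−je} x, σ^{−je} y) → 0 as j → ∞) if and only if there exists n ∈ ℤ^k such that x(m,n) = y(m,n) for all m ≤ n. -/

import Mathlib

open scoped Classical
open TopologicalSpace MeasureTheory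

/-- A `k`-graph: a countable small category with a degree functor to `ℕ^k`
satisfying the unique factorisation property.  Objects are identified with
the degree-zero morphisms. -/
structure KGraph (k : ℕ) where
  Mor : Type
  countable : Countable Mor
  src : Mor → Mor
  rng : Mor → Mor
  deg : Mor → Fin k → ℕ
  comp : (lam mu : Mor) → src lam = rng mu → Mor
  deg_src : ∀ lam, deg (src lam) = 0
  deg_rng : ∀ lam, deg (rng lam) = 0
  src_obj : ∀ v, deg v = 0 → src v = v
  rng_obj : ∀ v, deg v = 0 → rng v = v
  src_comp : ∀ lam mu h, src (comp lam mu h) = src mu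
  rng_comp : ∀ lam mu h, rng (comp lam mu h) = rng lam
  deg_comp : ∀ lam mu h, deg (comp lam mu h) = deg lam + deg mu
  id_comp : ∀ lam (h : src (rng lam) = rng lam), comp (rng lam) lam h = lam
  comp_id : ∀ lam (h : src lam = rng (src lam)), comp lam (src lam) h = lam
  assoc : ∀ l m n (h1 : src l = rng m) (h2 : src m = rng n)
      (h3 : src (comp l m h1) = rng n) (h4 : src l = rng (comp m n h2)),
      comp (comp l m h1) n h3 = comp l (comp m n h2) h4
  factor : ∀ lam (n1 n2 : Fin k → ℕ), deg lam = n1 + n2 →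
      ∃! p : Mor × Mor, deg p.1 = n1 ∧ deg p.2 = n2 ∧
        ∃ h : src p.1 = rng p.2, comp p.1 p.2 h = lam

namespace KGraph

variable {k : ℕ}

/-- The vertices (objects) of a `k`-graph are the degree-zero morphisms. -/
def IsVertex (Λ : KGraph k) (v : Λ.Mor) : Prop := Λ.deg v = 0

/-- Standing assumption (★): for each `p ∈ ℕ^k` the restrictions of `r` and `s`
to `Λ^p` are surjective (onto the vertices) and finite-to-one. -/
def Star (Λ : KGraph k) : Prop :=
  ∀ p : Fin k → ℕ,
    (∀ v, Λ.IsVertex v →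
      (∃ lam, Λ.deg lam = p ∧ Λ.rng lam = v) ∧
      (∃ lam, Λ.deg lam = p ∧ Λ.src lam = v)) ∧
    (∀ v, Λ.IsVertex v →
      {lam | Λ.deg lam = p ∧ Λ.rng lam = v}.Finite ∧
      {lam | Λ.deg lam = p ∧ Λ.src lam = v}.Finite)

/-- Irreducibility (strong connectedness) of a `k`-graph. -/
def Irreducible (Λ : KGraph k) : Prop :=
  ∀ u v, Λ.IsVertex u → Λ.IsVertex v →
    ∃ lam, Λ.deg lam ≠ 0 ∧ Λ.rng lam = u ∧ Λ.src lam = v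

/-- Primitivity of a `k`-graph. -/
def Primitive (Λ : KGraph k) : Prop :=
  ∃ p : Fin k → ℕ, p ≠ 0 ∧ ∀ u v, Λ.IsVertex u → Λ.IsVertex v →
    ∃ lam, Λ.deg lam = p ∧ Λ.rng lam = u ∧ Λ.src lam = v

/-- The degree of a morphism, viewed in `ℤ^k`. -/
def degZ (Λ : KGraph k) (lam : Λ.Mor) : Fin k → ℤ := fun i => (Λ.deg lam i : ℤ)

/-- The number of morphisms of degree `p` with range `u` and source `v`. -/
noncomputable def count (Λ : KGraph k) (p : Fin k → ℕ) (u v : Λ.Mor) : ℕ :=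
  Nat.card {lam : Λ.Mor // Λ.deg lam = p ∧ Λ.rng lam = u ∧ Λ.src lam = v}

end KGraph

/-- A two-sided infinite path in a `k`-graph: a degree-preserving functor from
the `k`-graph `Δ = {(m,n) ∈ ℤ^k × ℤ^k : m ≤ n}` to `Λ`. -/
structure TwoSidedPath {k : ℕ} (Λ : KGraph k) where
  toFun : ∀ m n : Fin k → ℤ, m ≤ n → Λ.Mor
  deg_eq : ∀ m n (h : m ≤ n) (i : Fin k), (Λ.deg (toFun m n h) i : ℤ) = n i - m i
  src_eq : ∀ m n (h : m ≤ n), Λ.src (toFun m n h) = toFun n n le_rfl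
  rng_eq : ∀ m n (h : m ≤ n), Λ.rng (toFun m n h) = toFun m m le_rfl
  comp_eq : ∀ l m n (h1 : l ≤ m) (h2 : m ≤ n),
      Λ.comp (toFun l m h1) (toFun m n h2)
        ((src_eq l m h1).trans (rng_eq m n h2).symm) = toFun l n (h1.trans h2)

/-- A one-sided infinite path in a `k`-graph: a degree-preserving functor from
the `k`-graph `Ω = {(m,n) ∈ ℕ^k × ℕ^k : m ≤ n}` to `Λ`. -/
structure OneSidedPath {k : ℕ} (Λ : KGraph k) where
  toFun : ∀ m n : Fin k → ℕ, m ≤ n → Λ.Mor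
  deg_eq : ∀ m n (h : m ≤ n) (i : Fin k), Λ.deg (toFun m n h) i = n i - m i
  src_eq : ∀ m n (h : m ≤ n), Λ.src (toFun m n h) = toFun n n le_rfl
  rng_eq : ∀ m n (h : m ≤ n), Λ.rng (toFun m n h) = toFun m m le_rfl
  comp_eq : ∀ l m n (h1 : l ≤ m) (h2 : m ≤ n),
      Λ.comp (toFun l m h1) (toFun m n h2)
        ((src_eq l m h1).trans (rng_eq m n h2).symm) = toFun l n (h1.trans h2)

namespace TwoSidedPath

variable {k : ℕ} {Λ : KGraph k}

theorem toFun_congr (x : TwoSidedPath Λ) {m n m' n' : Fin k → ℤ}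
    (hm : m = m') (hn : n = n') (h : m ≤ n) (h' : m' ≤ n') :
    x.toFun m n h = x.toFun m' n' h' := by subst hm; subst hn; rfl

/-- The vertex `x(0)` of a two-sided path. -/
def obj0 (x : TwoSidedPath Λ) : Λ.Mor := x.toFun 0 0 le_rfl

end TwoSidedPath

theorem le_add_degZ {k : ℕ} (Λ : KGraph k) (n : Fin k → ℤ) (lam : Λ.Mor) :
    n ≤ n + Λ.degZ lam :=
  Pi.le_def.mpr fun i => by
    show n i ≤ n i + (Λ.deg lam i : ℤ); omega

/-- The cylinder set `Z(λ, n) = {x ∈ Λ^Δ : x(n, n + d(λ)) = λ}`. -/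
def ZCyl {k : ℕ} (Λ : KGraph k) (lam : Λ.Mor) (n : Fin k → ℤ) :
    Set (TwoSidedPath Λ) :=
  {x | x.toFun n (n + Λ.degZ lam) (le_add_degZ Λ n lam) = lam}

/-- The topology on `Λ^Δ` generated by the cylinder sets. -/
instance {k : ℕ} (Λ : KGraph k) : TopologicalSpace (TwoSidedPath Λ) :=
  TopologicalSpace.generateFrom {S | ∃ lam n, S = ZCyl Λ lam n}

noncomputable instance {k : ℕ} (Λ : KGraph k) : MeasurableSpace (TwoSidedPath Λ) :=
  borel _

/-- The one-sided cylinder set `Z(λ) = {x ∈ Λ^Ω : x(0, d(λ)) = λ}`. -/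
def OCyl {k : ℕ} (Λ : KGraph k) (lam : Λ.Mor) : Set (OneSidedPath Λ) :=
  {x | x.toFun 0 (Λ.deg lam) (Pi.le_def.mpr fun _ => Nat.zero_le _) = lam}

/-- The topology on `Λ^Ω` generated by the cylinder sets. -/
instance {k : ℕ} (Λ : KGraph k) : TopologicalSpace (OneSidedPath Λ) :=
  TopologicalSpace.generateFrom {S | ∃ lam, S = OCyl Λ lam}

/-- The shift `σ^n` on the two-sided path space, for `n ∈ ℤ^k`. -/
def TwoSidedPath.shift {k : ℕ} {Λ : KGraph k} (n : Fin k → ℤ)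
    (x : TwoSidedPath Λ) : TwoSidedPath Λ where
  toFun l m h := x.toFun (l + n) (m + n) (add_le_add_left h n)
  deg_eq l m h i := by
    show (Λ.deg (x.toFun (l + n) (m + n) (add_le_add_left h n)) i : ℤ) = m i - l i
    have h' := x.deg_eq (l + n) (m + n) (add_le_add_left h n) i
    simp only [Pi.add_apply] at h'
    omega
  src_eq l m h := x.src_eq (l + n) (m + n) (add_le_add_left h n)
  rng_eq l m h := x.rng_eq (l + n) (m + n) (add_le_add_left h n)
  comp_eq l m m' h1 h2 :=
    x.comp_eq (l + n) (m + n) (m' + n) (add_le_add_left h1 n) (add_le_add_left h2 n)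

/-- The shift `σ^p` on the one-sided path space, for `p ∈ ℕ^k`. -/
def OneSidedPath.shift {k : ℕ} {Λ : KGraph k} (p : Fin k → ℕ)
    (x : OneSidedPath Λ) : OneSidedPath Λ where
  toFun l m h := x.toFun (l + p) (m + p) (add_le_add_left h p)
  deg_eq l m h i := by
    show Λ.deg (x.toFun (l + p) (m + p) (add_le_add_left h p)) i = m i - l i
    have h' := x.deg_eq (l + p) (m + p) (add_le_add_left h p) i
    simp only [Pi.add_apply] at h'
    omega
  src_eq l m h := x.src_eq (l + p) (m + p) (add_le_add_left h p)
  rng_eq l m h := x.rng_eq (l + p) (m + p) (add_le_add_left h p)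
  comp_eq l m m' h1 h2 :=
    x.comp_eq (l + p) (m + p) (m' + p) (add_le_add_left h1 p) (add_le_add_left h2 p)

/-- The vector `(j, …, j) ∈ ℤ^k`, i.e. `j·e` where `e = (1,…,1)`. -/
def jvecZ (k : ℕ) (j : ℕ) : Fin k → ℤ := fun _ => (j : ℤ)

theorem neg_jvecZ_le (k j : ℕ) : -(jvecZ k j) ≤ jvecZ k j :=
  Pi.le_def.mpr fun _ => by show -((j : ℤ)) ≤ (j : ℤ); omega

/-- Coercion `ℕ^k → ℤ^k`. -/
def coeZ {k : ℕ} (p : Fin k → ℕ) : Fin k → ℤ := fun i => (p i : ℤ)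

theorem coeZ_le_coeZ {k : ℕ} {m n : Fin k → ℕ} (h : m ≤ n) : coeZ m ≤ coeZ n :=
  Pi.le_def.mpr fun i => by
    show ((m i : ℤ)) ≤ (n i : ℤ)
    exact_mod_cast Pi.le_def.mp h i

theorem neg_coeZ_le {k : ℕ} (m : Fin k → ℕ) : -(coeZ m) ≤ coeZ m :=
  Pi.le_def.mpr fun i => by show -((m i : ℤ)) ≤ (m i : ℤ); omega

/-- The quantity `h(x,y) ∈ ℕ∞`:  `0` if `x(0) ≠ y(0)`, and otherwise
`1 + sup { j : x(-je, je) = y(-je, je) }`. -/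
noncomputable def hdist {k : ℕ} {Λ : KGraph k} (x y : TwoSidedPath Λ) : ℕ∞ :=
  if x.obj0 = y.obj0 then
    1 + sSup {c : ℕ∞ | ∃ j : ℕ, c = (j : ℕ∞) ∧
        x.toFun (-(jvecZ k j)) (jvecZ k j) (neg_jvecZ_le k j) =
        y.toFun (-(jvecZ k j)) (jvecZ k j) (neg_jvecZ_le k j)}
  else 0

/-- The metric `ρ(x,y) = r^{h(x,y)}`, with `r^∞ = 0`. -/
noncomputable def rho {k : ℕ} {Λ : KGraph k} (r : ℝ) (x y : TwoSidedPath Λ) : ℝ :=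
  if hdist x y = ⊤ then 0 else r ^ (hdist x y).toNat

/-- The local contracting set `E_x`. -/
def Ex {k : ℕ} {Λ : KGraph k} (x : TwoSidedPath Λ) : Set (TwoSidedPath Λ) :=
  {y | ∀ m n (h : m ≤ n), 0 ≤ m → y.toFun m n h = x.toFun m n h}

/-- The local expanding set `F_x`. -/
def Fx {k : ℕ} {Λ : KGraph k} (x : TwoSidedPath Λ) : Set (TwoSidedPath Λ) :=
  {y | ∀ m n (h : m ≤ n), n ≤ 0 → y.toFun m n h = x.toFun m n h}

/-- The restriction map `π : Λ^Δ → Λ^Ω`. -/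
def TwoSidedPath.restrict {k : ℕ} {Λ : KGraph k} (x : TwoSidedPath Λ) :
    OneSidedPath Λ where
  toFun m n h := x.toFun (coeZ m) (coeZ n) (coeZ_le_coeZ h)
  deg_eq m n h i := by
    show Λ.deg (x.toFun (coeZ m) (coeZ n) (coeZ_le_coeZ h)) i = n i - m i
    have h' := x.deg_eq (coeZ m) (coeZ n) (coeZ_le_coeZ h) i
    simp only [coeZ] at h'
    omega
  src_eq m n h := x.src_eq (coeZ m) (coeZ n) (coeZ_le_coeZ h)
  rng_eq m n h := x.rng_eq (coeZ m) (coeZ n) (coeZ_le_coeZ h)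
  comp_eq l m n h1 h2 :=
    x.comp_eq (coeZ l) (coeZ m) (coeZ n) (coeZ_le_coeZ h1) (coeZ_le_coeZ h2)

/-- Stable equivalence: `x ∼ₛ y` iff the two paths eventually agree to the right. -/
def SRel {k : ℕ} {Λ : KGraph k} (x y : TwoSidedPath Λ) : Prop :=
  ∃ m : Fin k → ℤ, ∀ n (h : m ≤ n), x.toFun m n h = y.toFun m n h

/-- Unstable equivalence: `x ∼ᵤ y` iff the two paths eventually agree to the left. -/
def URel {k : ℕ} {Λ : KGraph k} (x y : TwoSidedPath Λ) : Prop :=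
  ∃ n : Fin k → ℤ, ∀ m (h : m ≤ n), x.toFun m n h = y.toFun m n h

/-- Asymptotic equivalence: `x ∼ₐ y` iff `x ∼ₛ y` and `x ∼ᵤ y`. -/
def ARel {k : ℕ} {Λ : KGraph k} (x y : TwoSidedPath Λ) : Prop :=
  ∃ m : Fin k → ℕ, ∀ n : Fin k → ℤ, coeZ m ≤ n →
    (∀ h : coeZ m ≤ n, x.toFun (coeZ m) n h = y.toFun (coeZ m) n h) ∧
    (∀ h' : -n ≤ -(coeZ m), x.toFun (-n) (-(coeZ m)) h' = y.toFun (-n) (-(coeZ m)) h')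

/-- The groupoid `G_{s,m}` of pairs agreeing from `m ∈ ℤ^k` onwards. -/
def Gsm {k : ℕ} (Λ : KGraph k) (m : Fin k → ℤ) :
    Set (TwoSidedPath Λ × TwoSidedPath Λ) :=
  {p | ∀ n (h : m ≤ n), p.1.toFun m n h = p.2.toFun m n h}

theorem TwoSidedPath.self_mem_cyl {k : ℕ} {Λ : KGraph k} (x : TwoSidedPath Λ)
    (m n : Fin k → ℤ) (h : m ≤ n) : x ∈ ZCyl Λ (x.toFun m n h) m := by
  show x.toFun m (m + Λ.degZ (x.toFun m n h)) _ = x.toFun m n h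
  apply x.toFun_congr rfl
  funext i
  show m i + (Λ.deg (x.toFun m n h) i : ℤ) = n i
  have h' := x.deg_eq m n h i
  omega

theorem degZ_obj0 {k : ℕ} {Λ : KGraph k} (x : TwoSidedPath Λ) :
    Λ.degZ x.obj0 = 0 := by
  funext i
  show (Λ.deg (x.toFun 0 0 le_rfl) i : ℤ) = 0
  have h' := x.deg_eq 0 0 le_rfl i
  simp only [Pi.zero_apply] at h'
  omega

theorem mem_vertex_cyl {k : ℕ} {Λ : KGraph k} {x z : TwoSidedPath Λ}
    (hz : z ∈ ZCyl Λ x.obj0 0) : z.obj0 = x.obj0 := by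
  have h0 : (0 : Fin k → ℤ) = 0 + Λ.degZ x.obj0 := by rw [degZ_obj0]; simp
  calc z.obj0 = z.toFun 0 (0 + Λ.degZ x.obj0) (le_add_degZ Λ 0 x.obj0) :=
        z.toFun_congr rfl h0 le_rfl (le_add_degZ Λ 0 x.obj0)
    _ = x.obj0 := hz


section Aux

variable {k : ℕ} {Λ : KGraph k}

theorem KGraph.comp_congr (Λ : KGraph k) {a a' b b' : Λ.Mor} (ha : a = a') (hb : b = b')
    (h : Λ.src a = Λ.rng b) (h' : Λ.src a' = Λ.rng b') :
    Λ.comp a b h = Λ.comp a' b' h' := by subst ha; subst hb; rfl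

theorem TwoSidedPath.split {x y : TwoSidedPath Λ} {m a n : Fin k → ℤ}
    (hma : m ≤ a) (han : a ≤ n)
    (hxy : x.toFun m n (hma.trans han) = y.toFun m n (hma.trans han)) :
    x.toFun m a hma = y.toFun m a hma ∧ x.toFun a n han = y.toFun a n han := by
  set n1 : Fin k → ℕ := fun i => (a i - m i).toNat with hn1
  set n2 : Fin k → ℕ := fun i => (n i - a i).toNat with hn2
  have hdeg : Λ.deg (x.toFun m n (hma.trans han)) = n1 + n2 := by
    funext i
    have hd := x.deg_eq m n (hma.trans han) i
    have h1 := Pi.le_def.mp hma i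
    have h2 := Pi.le_def.mp han i
    simp only [hn1, hn2, Pi.add_apply]
    omega
  obtain ⟨p, -, hup⟩ := Λ.factor _ n1 n2 hdeg
  have hx : Λ.deg (x.toFun m a hma) = n1 ∧ Λ.deg (x.toFun a n han) = n2 ∧
      ∃ h : Λ.src (x.toFun m a hma) = Λ.rng (x.toFun a n han),
        Λ.comp _ _ h = x.toFun m n (hma.trans han) := by
    refine ⟨?_, ?_, ⟨_, x.comp_eq m a n hma han⟩⟩
    · funext i; have h1 := x.deg_eq m a hma i; have h2 := Pi.le_def.mp hma i
      simp only [hn1]; omega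
    · funext i; have h1 := x.deg_eq a n han i; have h2 := Pi.le_def.mp han i
      simp only [hn2]; omega
  have hy : Λ.deg (y.toFun m a hma) = n1 ∧ Λ.deg (y.toFun a n han) = n2 ∧
      ∃ h : Λ.src (y.toFun m a hma) = Λ.rng (y.toFun a n han),
        Λ.comp _ _ h = x.toFun m n (hma.trans han) := by
    refine ⟨?_, ?_, ⟨_, (y.comp_eq m a n hma han).trans hxy.symm⟩⟩
    · funext i; have h1 := y.deg_eq m a hma i; have h2 := Pi.le_def.mp hma i
      simp only [hn1]; omega
    · funext i; have h1 := y.deg_eq a n han i; have h2 := Pi.le_def.mp han i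
      simp only [hn2]; omega
  have ex := hup (x.toFun m a hma, x.toFun a n han) hx
  have ey := hup (y.toFun m a hma, y.toFun a n han) hy
  have := ex.trans ey.symm
  exact ⟨congrArg Prod.fst this, congrArg Prod.snd this⟩

theorem TwoSidedPath.subblock {x y : TwoSidedPath Λ} {m a b n : Fin k → ℤ}
    (hma : m ≤ a) (hab : a ≤ b) (hbn : b ≤ n) (hmn : m ≤ n)
    (hxy : x.toFun m n hmn = y.toFun m n hmn) :
    x.toFun a b hab = y.toFun a b hab := by
  have h1 := (TwoSidedPath.split hma (hab.trans hbn) hxy).2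
  exact (TwoSidedPath.split hab hbn h1).1

theorem TwoSidedPath.merge {x y : TwoSidedPath Λ} {l m n : Fin k → ℤ}
    (h1 : l ≤ m) (h2 : m ≤ n)
    (ha : x.toFun l m h1 = y.toFun l m h1) (hb : x.toFun m n h2 = y.toFun m n h2) :
    x.toFun l n (h1.trans h2) = y.toFun l n (h1.trans h2) := by
  rw [← x.comp_eq l m n h1 h2, ← y.comp_eq l m n h1 h2]
  exact Λ.comp_congr ha hb _ _

theorem OneSidedPath.ext' {x y : OneSidedPath Λ} (h : x.toFun = y.toFun) : x = y := by
  cases x; cases y; cases h; rfl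

/-- constant vector -/
def cv (k : ℕ) (a : ℤ) : Fin k → ℤ := fun _ => a

theorem cv_le (k : ℕ) {a b : ℤ} (h : a ≤ b) : cv k a ≤ cv k b :=
  Pi.le_def.mpr fun _ => h

theorem TwoSidedPath.ev_congr (x : TwoSidedPath Λ) {a b a' b' : ℤ}
    (ha : a = a') (hb : b = b') (h : cv k a ≤ cv k b) (h' : cv k a' ≤ cv k b') :
    x.toFun (cv k a) (cv k b) h = x.toFun (cv k a') (cv k b') h' :=
  x.toFun_congr (by rw [ha]) (by rw [hb]) h h'

theorem neg_jvecZ_le_zero (k j : ℕ) : -(jvecZ k j) ≤ (0 : Fin k → ℤ) :=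
  Pi.le_def.mpr fun i => by simp only [Pi.neg_apply, jvecZ, Pi.zero_apply]; omega

theorem zero_le_jvecZ (k j : ℕ) : (0 : Fin k → ℤ) ≤ jvecZ k j :=
  Pi.le_def.mpr fun i => by simp only [jvecZ, Pi.zero_apply]; omega

theorem obj0_eq_of_block {x y : TwoSidedPath Λ} {j : ℕ}
    (h : x.toFun (-(jvecZ k j)) (jvecZ k j) (neg_jvecZ_le k j) =
         y.toFun (-(jvecZ k j)) (jvecZ k j) (neg_jvecZ_le k j)) :
    x.obj0 = y.obj0 :=
  TwoSidedPath.subblock (neg_jvecZ_le_zero k j) le_rfl (zero_le_jvecZ k j)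
    (neg_jvecZ_le k j) h

theorem hdist_ge_of_agree {x y : TwoSidedPath Λ} {j : ℕ}
    (h : x.toFun (-(jvecZ k j)) (jvecZ k j) (neg_jvecZ_le k j) =
         y.toFun (-(jvecZ k j)) (jvecZ k j) (neg_jvecZ_le k j)) :
    (j : ℕ∞) + 1 ≤ hdist x y := by
  have hobj := obj0_eq_of_block h
  unfold hdist
  rw [if_pos hobj]
  have hmem : (j : ℕ∞) ∈ {c : ℕ∞ | ∃ j' : ℕ, c = (j' : ℕ∞) ∧
      x.toFun (-(jvecZ k j')) (jvecZ k j') (neg_jvecZ_le k j') =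
      y.toFun (-(jvecZ k j')) (jvecZ k j') (neg_jvecZ_le k j')} := ⟨j, rfl, h⟩
  calc (j : ℕ∞) + 1 = 1 + (j : ℕ∞) := add_comm _ _
    _ ≤ 1 + _ := add_le_add_right (le_sSup hmem) 1

theorem agree_of_hdist_ge {x y : TwoSidedPath Λ} {j : ℕ}
    (h : (j : ℕ∞) + 1 ≤ hdist x y) :
    x.toFun (-(jvecZ k j)) (jvecZ k j) (neg_jvecZ_le k j) =
    y.toFun (-(jvecZ k j)) (jvecZ k j) (neg_jvecZ_le k j) := by
  unfold hdist at h
  by_cases hobj : x.obj0 = y.obj0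
  · rw [if_pos hobj] at h
    rcases Nat.eq_zero_or_pos j with hj0 | hjpos
    · subst hj0
      have e1 : -(jvecZ k 0) = (0 : Fin k → ℤ) := by
        funext i; simp [jvecZ]
      have e2 : jvecZ k 0 = (0 : Fin k → ℤ) := by
        funext i; simp [jvecZ]
      calc x.toFun (-(jvecZ k 0)) (jvecZ k 0) (neg_jvecZ_le k 0)
          = x.obj0 := x.toFun_congr e1 e2 _ le_rfl
        _ = y.obj0 := hobj
        _ = y.toFun (-(jvecZ k 0)) (jvecZ k 0) (neg_jvecZ_le k 0) :=
            (y.toFun_congr e1 e2 _ le_rfl).symm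
    · by_contra hne
      have hsup : sSup {c : ℕ∞ | ∃ j' : ℕ, c = (j' : ℕ∞) ∧
          x.toFun (-(jvecZ k j')) (jvecZ k j') (neg_jvecZ_le k j') =
          y.toFun (-(jvecZ k j')) (jvecZ k j') (neg_jvecZ_le k j')} ≤ ((j - 1 : ℕ) : ℕ∞) := by
        apply sSup_le
        rintro c ⟨j'', rfl, hag⟩
        have hlt : j'' < j := by
          by_contra hge
          push_neg at hge
          apply hne
          have hle1 : -(jvecZ k j'') ≤ -(jvecZ k j) :=
            Pi.le_def.mpr fun i => by
              simp only [Pi.neg_apply, jvecZ]; omega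
          have hle2 : jvecZ k j ≤ jvecZ k j'' :=
            Pi.le_def.mpr fun i => by simp only [jvecZ]; omega
          exact TwoSidedPath.subblock hle1 (neg_jvecZ_le k j) hle2 (neg_jvecZ_le k j'') hag
        exact_mod_cast Nat.le_sub_one_of_lt hlt
      have hle : (j : ℕ∞) + 1 ≤ 1 + ((j - 1 : ℕ) : ℕ∞) :=
        h.trans (add_le_add_right hsup 1)
      rw [add_comm] at hle
      have : (j : ℕ∞) ≤ ((j - 1 : ℕ) : ℕ∞) :=
        (WithTop.add_le_add_iff_left (by simp : (1 : ℕ∞) ≠ ⊤)).mp hle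
      have := Nat.cast_le.mp this
      omega
  · rw [if_neg hobj] at h
    exact absurd h (by simp)

theorem rho_nonneg {r : ℝ} (hr0 : 0 < r) (x y : TwoSidedPath Λ) : 0 ≤ rho r x y := by
  unfold rho
  split
  · exact le_rfl
  · exact pow_nonneg hr0.le _

theorem rho_le_of_hdist_ge {r : ℝ} (hr0 : 0 < r) (hr1 : r < 1)
    {x y : TwoSidedPath Λ} {N : ℕ} (h : (N : ℕ∞) + 1 ≤ hdist x y) :
    rho r x y ≤ r ^ N := by
  unfold rho
  split
  · exact pow_nonneg hr0.le N
  · next hT =>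
    apply pow_le_pow_of_le_one hr0.le hr1.le
    have hc : hdist x y = ((hdist x y).toNat : ℕ∞) := (ENat.coe_toNat hT).symm
    rw [hc] at h
    have : (N : ℕ∞) ≤ ((hdist x y).toNat : ℕ∞) := le_trans (le_self_add) h
    exact_mod_cast this

theorem hdist_ge_of_rho_lt {r : ℝ} (hr0 : 0 < r) (hr1 : r < 1)
    {x y : TwoSidedPath Λ} {N : ℕ} (h : rho r x y < r ^ N) :
    (N : ℕ∞) + 1 ≤ hdist x y := by
  unfold rho at h
  split at h
  · next hT => rw [hT]; exact le_top
  · next hT =>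
    have hlt : N < (hdist x y).toNat := by
      by_contra hge
      push_neg at hge
      exact absurd (pow_le_pow_of_le_one hr0.le hr1.le hge) (not_le.mpr h)
    have hc : hdist x y = ((hdist x y).toNat : ℕ∞) := (ENat.coe_toNat hT).symm
    rw [hc]
    exact_mod_cast hlt

end Aux

/-- Characterisation of the stable and unstable relations:
`x ∼ₛ y` iff `ρ(σ^{je} x, σ^{je} y) → 0` iff the paths agree from some
`m ∈ ℤ^k` to the right iff `π(σ^m x) = π(σ^m y)` for some `m ∈ ℕ^k`;
and `x ∼ᵤ y` iff `ρ(σ^{-je} x, σ^{-je} y) → 0`. -/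
theorem stable_unstable_characterisation {k : ℕ} (hk : 0 < k) (Λ : KGraph k)
    (hstar : Λ.Star) (r : ℝ) (hr0 : 0 < r) (hr1 : r < 1)
    (x y : TwoSidedPath Λ) :
    ((Filter.Tendsto (fun j : ℕ =>
        rho r (TwoSidedPath.shift (jvecZ k j) x) (TwoSidedPath.shift (jvecZ k j) y))
        Filter.atTop (nhds 0)) ↔ SRel x y) ∧
    (SRel x y ↔ ∃ m : Fin k → ℕ,
      (TwoSidedPath.shift (coeZ m) x).restrict =
        (TwoSidedPath.shift (coeZ m) y).restrict) ∧
    ((Filter.Tendsto (fun j : ℕ =>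
        rho r (TwoSidedPath.shift (-(jvecZ k j)) x)
          (TwoSidedPath.shift (-(jvecZ k j)) y))
        Filter.atTop (nhds 0)) ↔ URel x y) := by
  -- Part A forward: tendsto → SRel
  have partA1 : (Filter.Tendsto (fun j : ℕ =>
      rho r (TwoSidedPath.shift (jvecZ k j) x) (TwoSidedPath.shift (jvecZ k j) y))
      Filter.atTop (nhds 0)) → SRel x y := by
    intro ht
    obtain ⟨J, hJ⟩ := Filter.eventually_atTop.mp (ht.eventually (gt_mem_nhds hr0))
    have hB : ∀ j : ℕ, J ≤ j → ∀ (h : cv k ((j:ℤ)-1) ≤ cv k ((j:ℤ)+1)),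
        x.toFun (cv k ((j:ℤ)-1)) (cv k ((j:ℤ)+1)) h =
        y.toFun (cv k ((j:ℤ)-1)) (cv k ((j:ℤ)+1)) h := by
      intro j hj h
      have h1 : rho r (TwoSidedPath.shift (jvecZ k j) x)
          (TwoSidedPath.shift (jvecZ k j) y) < r ^ 1 := by
        rw [pow_one]; exact hJ j hj
      have h3 := agree_of_hdist_ge (hdist_ge_of_rho_lt hr0 hr1 h1)
      have e1 : -(jvecZ k 1) + jvecZ k j = cv k ((j:ℤ)-1) := by
        funext i; simp only [Pi.add_apply, Pi.neg_apply, jvecZ, cv]; omega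
      have e2 : (jvecZ k 1) + jvecZ k j = cv k ((j:ℤ)+1) := by
        funext i; simp only [Pi.add_apply, jvecZ, cv]; omega
      exact (x.toFun_congr e1.symm e2.symm h _).trans
        (h3.trans (y.toFun_congr e1 e2 _ h))
    have hChain : ∀ N : ℕ, ∀ (h : cv k ((J:ℤ)-1) ≤ cv k ((J:ℤ)+1+(N:ℤ))),
        x.toFun (cv k ((J:ℤ)-1)) (cv k ((J:ℤ)+1+(N:ℤ))) h =
        y.toFun (cv k ((J:ℤ)-1)) (cv k ((J:ℤ)+1+(N:ℤ))) h := by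
      intro N
      induction N with
      | zero =>
        intro h
        exact (x.ev_congr rfl (by push_cast; ring) h (cv_le k (by omega))).trans
          ((hB J le_rfl _).trans (y.ev_congr rfl (by push_cast; ring) _ h))
      | succ N ih =>
        intro h
        have hsub : x.toFun (cv k ((J:ℤ)+1+(N:ℤ))) (cv k ((J:ℤ)+1+((N+1:ℕ):ℤ)))
              (cv_le k (by push_cast; omega)) =
            y.toFun (cv k ((J:ℤ)+1+(N:ℤ))) (cv k ((J:ℤ)+1+((N+1:ℕ):ℤ)))
              (cv_le k (by push_cast; omega)) := by
          have hb := hB (J+N+1) (by omega) (cv_le k (by omega))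
          exact TwoSidedPath.subblock (cv_le k (by push_cast; omega))
            (cv_le k (by push_cast; omega)) (cv_le k (by push_cast; omega))
            (cv_le k (by omega)) hb
        exact TwoSidedPath.merge (cv_le k (by push_cast; omega))
          (cv_le k (by push_cast; omega)) (ih _) hsub
    refine ⟨cv k ((J:ℤ)-1), fun n hn => ?_⟩
    have hnb : n ≤ cv k ((J:ℤ)+1+((∑ i, (n i).toNat : ℕ):ℤ)) := Pi.le_def.mpr fun i => by
      have h1 : (n i).toNat ≤ ∑ i, (n i).toNat :=
        Finset.single_le_sum (f := fun j => (n j).toNat) (fun i _ => Nat.zero_le _) (Finset.mem_univ i)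
      have h2 := Int.self_le_toNat (n i)
      simp only [cv]; omega
    exact TwoSidedPath.subblock le_rfl hn hnb (hn.trans hnb) (hChain _ _)
  -- Part A backward: SRel → tendsto
  have partA2 : SRel x y → (Filter.Tendsto (fun j : ℕ =>
      rho r (TwoSidedPath.shift (jvecZ k j) x) (TwoSidedPath.shift (jvecZ k j) y))
      Filter.atTop (nhds 0)) := by
    rintro ⟨m, hm⟩
    set J := ∑ i, (m i).toNat with hJdef
    have hmJ : ∀ i, m i ≤ (J:ℤ) := fun i => by
      have h1 : (m i).toNat ≤ J := Finset.single_le_sum (f := fun j => (m j).toNat)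
        (fun i _ => Nat.zero_le _) (Finset.mem_univ i)
      have h2 := Int.self_le_toNat (m i)
      omega
    have hbound : ∀ j : ℕ, J ≤ j →
        rho r (TwoSidedPath.shift (jvecZ k j) x) (TwoSidedPath.shift (jvecZ k j) y)
          ≤ r ^ (j - J) := by
      intro j hj
      apply rho_le_of_hdist_ge hr0 hr1
      apply hdist_ge_of_agree (j := j - J)
      have hma : m ≤ -(jvecZ k (j-J)) + jvecZ k j := Pi.le_def.mpr fun i => by
        have := hmJ i
        simp only [Pi.add_apply, Pi.neg_apply, jvecZ]; omega
      have hab : -(jvecZ k (j-J)) + jvecZ k j ≤ (jvecZ k (j-J)) + jvecZ k j :=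
        Pi.le_def.mpr fun i => by
          simp only [Pi.add_apply, Pi.neg_apply, jvecZ]; omega
      exact TwoSidedPath.subblock hma hab le_rfl (hma.trans hab)
        (hm _ (hma.trans hab))
    have hg : Filter.Tendsto (fun j : ℕ => r ^ (j - J)) Filter.atTop (nhds 0) :=
      (tendsto_pow_atTop_nhds_zero_of_lt_one hr0.le hr1).comp (Filter.tendsto_sub_atTop_nat J)
    exact squeeze_zero' (Filter.Eventually.of_forall fun j => rho_nonneg hr0 _ _)
      (Filter.eventually_atTop.mpr ⟨J, hbound⟩) hg
  -- Part B forward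
  have partB1 : SRel x y → ∃ m : Fin k → ℕ,
      (TwoSidedPath.shift (coeZ m) x).restrict =
        (TwoSidedPath.shift (coeZ m) y).restrict := by
    rintro ⟨m, hm⟩
    refine ⟨fun i => (m i).toNat, OneSidedPath.ext' ?_⟩
    funext a b hab
    have hma : m ≤ coeZ a + coeZ (fun i => (m i).toNat) := Pi.le_def.mpr fun i => by
      have := Int.self_le_toNat (m i)
      simp only [Pi.add_apply, coeZ]; omega
    have hab' : coeZ a + coeZ (fun i => (m i).toNat) ≤
        coeZ b + coeZ (fun i => (m i).toNat) := Pi.le_def.mpr fun i => by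
      have := Pi.le_def.mp hab i
      simp only [Pi.add_apply, coeZ]; omega
    exact TwoSidedPath.subblock hma hab' le_rfl (hma.trans hab')
      (hm _ (hma.trans hab'))
  -- Part B backward
  have partB2 : (∃ m : Fin k → ℕ,
      (TwoSidedPath.shift (coeZ m) x).restrict =
        (TwoSidedPath.shift (coeZ m) y).restrict) → SRel x y := by
    rintro ⟨m₀, heq⟩
    refine ⟨coeZ m₀, fun n hn => ?_⟩
    set b : Fin k → ℕ := fun i => (n i - (m₀ i : ℤ)).toNat with hb
    have h0b : (0 : Fin k → ℕ) ≤ b := Pi.le_def.mpr fun i => Nat.zero_le _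
    have h1 : ((TwoSidedPath.shift (coeZ m₀) x).restrict).toFun 0 b h0b =
        ((TwoSidedPath.shift (coeZ m₀) y).restrict).toFun 0 b h0b := by rw [heq]
    have e1 : coeZ (0 : Fin k → ℕ) + coeZ m₀ = coeZ m₀ := by
      funext i; simp [coeZ]
    have e2 : coeZ b + coeZ m₀ = n := by
      funext i
      have := Pi.le_def.mp hn i
      simp only [coeZ] at this
      simp only [Pi.add_apply, coeZ, hb]
      omega
    exact (x.toFun_congr e1.symm e2.symm hn _).trans
      (h1.trans (y.toFun_congr e1 e2 _ hn))
  -- Part C forward: tendsto → URel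
  have partC1 : (Filter.Tendsto (fun j : ℕ =>
      rho r (TwoSidedPath.shift (-(jvecZ k j)) x)
        (TwoSidedPath.shift (-(jvecZ k j)) y))
      Filter.atTop (nhds 0)) → URel x y := by
    intro ht
    obtain ⟨J, hJ⟩ := Filter.eventually_atTop.mp (ht.eventually (gt_mem_nhds hr0))
    have hB : ∀ j : ℕ, J ≤ j → ∀ (h : cv k (-(j:ℤ)-1) ≤ cv k (-(j:ℤ)+1)),
        x.toFun (cv k (-(j:ℤ)-1)) (cv k (-(j:ℤ)+1)) h =
        y.toFun (cv k (-(j:ℤ)-1)) (cv k (-(j:ℤ)+1)) h := by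
      intro j hj h
      have h1 : rho r (TwoSidedPath.shift (-(jvecZ k j)) x)
          (TwoSidedPath.shift (-(jvecZ k j)) y) < r ^ 1 := by
        rw [pow_one]; exact hJ j hj
      have h3 := agree_of_hdist_ge (hdist_ge_of_rho_lt hr0 hr1 h1)
      have e1 : -(jvecZ k 1) + -(jvecZ k j) = cv k (-(j:ℤ)-1) := by
        funext i; simp only [Pi.add_apply, Pi.neg_apply, jvecZ, cv]; omega
      have e2 : (jvecZ k 1) + -(jvecZ k j) = cv k (-(j:ℤ)+1) := by
        funext i; simp only [Pi.add_apply, Pi.neg_apply, jvecZ, cv]; omega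
      exact (x.toFun_congr e1.symm e2.symm h _).trans
        (h3.trans (y.toFun_congr e1 e2 _ h))
    have hChain : ∀ N : ℕ, ∀ (h : cv k (-(J:ℤ)-1-(N:ℤ)) ≤ cv k (-(J:ℤ)+1)),
        x.toFun (cv k (-(J:ℤ)-1-(N:ℤ))) (cv k (-(J:ℤ)+1)) h =
        y.toFun (cv k (-(J:ℤ)-1-(N:ℤ))) (cv k (-(J:ℤ)+1)) h := by
      intro N
      induction N with
      | zero =>
        intro h
        exact (x.ev_congr (by push_cast; ring) rfl h (cv_le k (by omega))).trans
          ((hB J le_rfl _).trans (y.ev_congr (by push_cast; ring) rfl _ h))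
      | succ N ih =>
        intro h
        have hsub : x.toFun (cv k (-(J:ℤ)-1-((N+1:ℕ):ℤ))) (cv k (-(J:ℤ)-1-(N:ℤ)))
              (cv_le k (by push_cast; omega)) =
            y.toFun (cv k (-(J:ℤ)-1-((N+1:ℕ):ℤ))) (cv k (-(J:ℤ)-1-(N:ℤ)))
              (cv_le k (by push_cast; omega)) := by
          have hb := hB (J+N+1) (by omega) (cv_le k (by omega))
          exact TwoSidedPath.subblock (cv_le k (by push_cast; omega))
            (cv_le k (by push_cast; omega)) (cv_le k (by push_cast; omega))
            (cv_le k (by omega)) hb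
        exact TwoSidedPath.merge (cv_le k (by push_cast; omega))
          (cv_le k (by push_cast; omega)) hsub (ih _)
    refine ⟨cv k (-(J:ℤ)+1), fun m hm => ?_⟩
    have hma : cv k (-(J:ℤ)-1-((∑ i, (-(m i)).toNat : ℕ):ℤ)) ≤ m :=
      Pi.le_def.mpr fun i => by
        have h1 : (-(m i)).toNat ≤ ∑ i, (-(m i)).toNat :=
          Finset.single_le_sum (f := fun j => (-(m j)).toNat) (fun i _ => Nat.zero_le _) (Finset.mem_univ i)
        have h2 := Int.self_le_toNat (-(m i))
        simp only [cv]; omega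
    exact TwoSidedPath.subblock hma hm le_rfl (hma.trans hm) (hChain _ _)
  -- Part C backward: URel → tendsto
  have partC2 : URel x y → (Filter.Tendsto (fun j : ℕ =>
      rho r (TwoSidedPath.shift (-(jvecZ k j)) x)
        (TwoSidedPath.shift (-(jvecZ k j)) y))
      Filter.atTop (nhds 0)) := by
    rintro ⟨n, hn⟩
    set J := ∑ i, (-(n i)).toNat with hJdef
    have hnJ : ∀ i, -(J:ℤ) ≤ n i := fun i => by
      have h1 : (-(n i)).toNat ≤ J := Finset.single_le_sum (f := fun j => (-(n j)).toNat)
        (fun i _ => Nat.zero_le _) (Finset.mem_univ i)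
      have h2 := Int.self_le_toNat (-(n i))
      omega
    have hbound : ∀ j : ℕ, J ≤ j →
        rho r (TwoSidedPath.shift (-(jvecZ k j)) x)
          (TwoSidedPath.shift (-(jvecZ k j)) y) ≤ r ^ (j - J) := by
      intro j hj
      apply rho_le_of_hdist_ge hr0 hr1
      apply hdist_ge_of_agree (j := j - J)
      have hma : -(jvecZ k (j-J)) + -(jvecZ k j) ≤ (jvecZ k (j-J)) + -(jvecZ k j) :=
        Pi.le_def.mpr fun i => by
          simp only [Pi.add_apply, Pi.neg_apply, jvecZ]; omega
      have hbn : (jvecZ k (j-J)) + -(jvecZ k j) ≤ n := Pi.le_def.mpr fun i => by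
        have := hnJ i
        simp only [Pi.add_apply, Pi.neg_apply, jvecZ]; omega
      exact TwoSidedPath.subblock le_rfl hma hbn (hma.trans hbn)
        (hn _ (hma.trans hbn))
    have hg : Filter.Tendsto (fun j : ℕ => r ^ (j - J)) Filter.atTop (nhds 0) :=
      (tendsto_pow_atTop_nhds_zero_of_lt_one hr0.le hr1).comp (Filter.tendsto_sub_atTop_nat J)
    exact squeeze_zero' (Filter.Eventually.of_forall fun j => rho_nonneg hr0 _ _)
      (Filter.eventually_atTop.mpr ⟨J, hbound⟩) hg
  exact ⟨⟨partA1, partA2⟩, ⟨partB1, partB2⟩, ⟨partC1, partC2⟩⟩
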